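/- arXiv:2306.09561 — 2 statements merged into one kernel-verified Lean document; each statement's English description precedes it below -/
import Mathlib

section
/- Matrix characterisation (propositional case): a propositional DNF matrix M is valid (satisfied by every valuation) if and only if every path through M contains a complementary pair of literals, i.e., contains both an atom and its negation. -/
/-- A propositional literal: an atom together with a polarity. -/
abbrev Lit (α : Type*) := α × Bool

/-- A valuation satisfies a literal. -/
def satLit {α : Type*} (v : α → Bool) (L : Lit α) : Prop := v L.1 = L.2

/-- A valuation satisfies a clause (conjunction of its literals). -/
def satClause {α : Type*} (v : α → Bool) (C : Finset (Lit α)) : Prop :=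
  ∀ L ∈ C, satLit v L

/-- A valuation satisfies a matrix (disjunction of its clauses, DNF). -/
def satMatrix {α : Type*} (v : α → Bool) (M : Finset (Finset (Lit α))) : Prop :=
  ∃ C ∈ M, satClause v C

/-- Matrix characterisation: a DNF matrix is valid iff every path through it
contains a complementary pair of literals. -/
theorem matrix_characterisation {α : Type*} (n : ℕ)
    (C : Fin n → Finset (Lit α)) (hC : ∀ i, (C i).Nonempty) :
    (∀ v : α → Bool, ∃ i, satClause v (C i)) ↔
    (∀ p : Fin n → Lit α, (∀ i, p i ∈ C i) →
      ∃ i j, (p i).1 = (p j).1 ∧ (p i).2 = !(p j).2) := by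
  classical
  constructor
  · intro hval p hp
    by_contra hno
    push_neg at hno
    set v : α → Bool := fun a => if ∃ i, (p i).1 = a ∧ (p i).2 = true then false else true with hv
    obtain ⟨i, hi⟩ := hval v
    have := hi (p i) (hp i)
    unfold satLit at this
    rcases hb : (p i).2 with _ | _
    · -- (p i).2 = false, so v (p i).1 = false, so ∃ j, (p j).1 = (p i).1 ∧ (p j).2 = true
      rw [hb] at this
      simp only [hv] at this
      by_cases h : ∃ j, (p j).1 = (p i).1 ∧ (p j).2 = true
      · obtain ⟨j, hj1, hj2⟩ := h
        exact (hno j i) hj1 (by simp [hj2, hb])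
      · simp [h] at this
    · rw [hb] at this
      have h : ∃ j, (p j).1 = (p i).1 ∧ (p j).2 = true := ⟨i, ⟨rfl, hb⟩⟩
      simp only [hv, if_pos h] at this
      exact absurd this (by simp)
  · intro hpath v
    by_contra hno
    push_neg at hno
    have hex : ∀ i, ∃ L ∈ C i, ¬ satLit v L := by
      intro i
      by_contra h
      push_neg at h
      exact hno i h
    choose p hp hnsat using hex
    obtain ⟨i, j, h1, h2⟩ := hpath p hp
    apply hnsat i
    unfold satLit
    have hj := hnsat j
    unfold satLit at hj
    rw [h1, h2]
    cases hv : v (p j).1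
    · cases hbj : (p j).2
      · exact absurd (hv.trans hbj.symm) hj
      · simp [hbj]
    · cases hbj : (p j).2
      · simp [hbj]
      · exact absurd (hv.trans hbj.symm) hj
end

section
/- If some path through a propositional DNF matrix M contains no complementary pair of literals, then M is falsifiable: there exists a valuation assigning false to every literal on that path, and this valuation does not satisfy M. -/
/-- If some path through a DNF matrix contains no complementary pair, then the
matrix is falsifiable by a valuation making every literal on that path false. -/
theorem falsifiable_of_open_path {α : Type*} (n : ℕ)
    (C : Fin n → Finset (Lit α))
    (p : Fin n → Lit α) (hp : ∀ i, p i ∈ C i)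
    (hopen : ¬ ∃ i j, (p i).1 = (p j).1 ∧ (p i).2 = !(p j).2) :
    ∃ v : α → Bool, (∀ i, ¬ satLit v (p i)) ∧ ¬ (∃ i, satClause v (C i)) := by
  classical
  push_neg at hopen
  refine ⟨fun a => if h : ∃ i, (p i).1 = a then !(p h.choose).2 else true, ?_, ?_⟩
  · intro i hsat
    have h : ∃ j, (p j).1 = (p i).1 := ⟨i, rfl⟩
    simp only [satLit, dif_pos h] at hsat
    exact hopen i h.choose h.choose_spec.symm hsat.symm
  · rintro ⟨i, hi⟩
    have h : ∃ j, (p j).1 = (p i).1 := ⟨i, rfl⟩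
    have := hi (p i) (hp i)
    simp only [satLit, dif_pos h] at this
    exact hopen i h.choose h.choose_spec.symm this.symm
end
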